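/- arXiv:1203.3280 — 3 statements merged into one kernel-verified Lean document; each statement's English description precedes it below -/
import Mathlib

section
/- Let X₄(n) = Σ_{j=1}^{n} 2^{f(j)} with f(j) the largest m ≥ 0 such that j > m(m+1)/2. Then X₄ satisfies the Frame–Stewart recurrence: for every t ≥ 1 and every n with t(t+1)/2 < n ≤ (t+1)(t+2)/2, X₄(n) = 2·X₄(n − (t+1)) + (2^{t+1} − 1). -/
/-- `hanoiF j` is the largest nonnegative integer `m` with `j > m(m+1)/2`. -/
def hanoiF (j : ℕ) : ℕ := Nat.findGreatest (fun m => m * (m + 1) / 2 < j) j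

/-- Frame–Stewart move count `X₄(n) = Σ_{j=1}^n 2^{f(j)}`. -/
def X4 (n : ℕ) : ℕ := ∑ j ∈ Finset.Icc 1 n, 2 ^ hanoiF j

lemma hanoiF_eq (t j : ℕ) (h1 : t * (t + 1) / 2 < j) (h2 : j ≤ (t + 1) * (t + 2) / 2) :
    hanoiF j = t := by
  have h2t : 2 * t ≤ t * (t + 1) := by
    rcases Nat.eq_zero_or_pos t with h | h
    · simp [h]
    · have ht : t ≤ t * t := Nat.le_mul_of_pos_left t h
      have hm : t * (t + 1) = t * t + t := by ring
      omega
  apply (Nat.findGreatest_eq_iff).mpr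
  refine ⟨by omega, fun _ => h1, fun k hk hkj hP => ?_⟩
  have hm : (t + 1) * (t + 2) ≤ k * (k + 1) := Nat.mul_le_mul (by omega) (by omega)
  have := Nat.div_le_div_right (c := 2) hm
  omega

lemma X4_succ (k : ℕ) : X4 (k + 1) = X4 k + 2 ^ hanoiF (k + 1) := by
  rw [X4, X4, Finset.sum_Icc_succ_top (by omega)]

lemma X4_block (t : ℕ) : ∀ m, m ≤ t + 1 →
    X4 (t * (t + 1) / 2 + m) = X4 (t * (t + 1) / 2) + m * 2 ^ t := by
  intro m
  induction m with
  | zero => simp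
  | succ q ih =>
    intro hq
    have e : t * (t + 1) / 2 + (q + 1) = (t * (t + 1) / 2 + q) + 1 := by omega
    rw [e, X4_succ, ih (by omega)]
    have hf : hanoiF (t * (t + 1) / 2 + q + 1) = t := by
      apply hanoiF_eq
      · omega
      · have : (t + 1) * (t + 2) = t * (t + 1) + 2 * (t + 1) := by ring
        omega
    rw [hf]; ring

lemma X4_tri (t : ℕ) : X4 (t * (t + 1) / 2) + 2 ^ t = t * 2 ^ t + 1 := by
  induction t with
  | zero => simp [X4]
  | succ s ih =>
    have e : (s + 1) * (s + 2) / 2 = s * (s + 1) / 2 + (s + 1) := by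
      have : (s + 1) * (s + 2) = s * (s + 1) + 2 * (s + 1) := by ring
      omega
    rw [e, X4_block s (s + 1) le_rfl, pow_succ]
    have f1 : (s + 1) * 2 ^ s = s * 2 ^ s + 2 ^ s := by ring
    have f2 : (s + 1) * (2 ^ s * 2) = 2 * (s * 2 ^ s) + 2 * 2 ^ s := by ring
    omega

/-- The Frame–Stewart recurrence: for every t ≥ 1 and n with
t(t+1)/2 < n ≤ (t+1)(t+2)/2, `X₄(n) = 2·X₄(n − (t+1)) + (2^{t+1} − 1)`. -/
theorem stmt_3 (t n : ℕ) (ht : 1 ≤ t)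
    (h1 : t * (t + 1) / 2 < n) (h2 : n ≤ (t + 1) * (t + 2) / 2) :
    X4 n = 2 * X4 (n - (t + 1)) + (2 ^ (t + 1) - 1) := by
  obtain ⟨s, rfl⟩ : ∃ s, t = s + 1 := ⟨t - 1, by omega⟩
  have hr1 : (s + 1) * (s + 1 + 1) = (s + 1) * (s + 2) := by ring
  have hr2 : (s + 1 + 1) * (s + 1 + 2) = (s + 2) * (s + 3) := by ring
  have h1' : (s + 1) * (s + 2) / 2 < n := by omega
  have h2' : n ≤ (s + 2) * (s + 3) / 2 := by omega
  clear h1 h2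
  have e1 : (s + 1) * (s + 2) / 2 = s * (s + 1) / 2 + (s + 1) := by
    have : (s + 1) * (s + 2) = s * (s + 1) + 2 * (s + 1) := by ring
    omega
  have e2 : (s + 2) * (s + 3) / 2 = (s + 1) * (s + 2) / 2 + (s + 2) := by
    have : (s + 2) * (s + 3) = (s + 1) * (s + 2) + 2 * (s + 2) := by ring
    omega
  obtain ⟨q, hq⟩ : ∃ q, n = (s + 1) * (s + 2) / 2 + (q + 1) := ⟨n - (s + 1) * (s + 2) / 2 - 1, by omega⟩
  have hq2 : q + 1 ≤ s + 2 := by omega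
  have hX1 : X4 n = X4 ((s + 1) * (s + 2) / 2) + (q + 1) * 2 ^ (s + 1) := by
    rw [hq]; exact X4_block (s + 1) (q + 1) hq2
  have hsub : n - (s + 1 + 1) = s * (s + 1) / 2 + q := by omega
  have hX2 : X4 (n - (s + 1 + 1)) = X4 (s * (s + 1) / 2) + q * 2 ^ s := by
    rw [hsub]; exact X4_block s q (by omega)
  have hA := X4_tri (s + 1)
  rw [show (s + 1) * (s + 1 + 1) = (s + 1) * (s + 2) from by ring] at hA
  have hB := X4_tri s
  have hPpos : 1 ≤ 2 ^ s := Nat.one_le_two_pow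
  simp only [pow_succ] at hX1 hA ⊢
  have f1 : (q + 1) * (2 ^ s * 2) = 2 * (q * 2 ^ s) + 2 * 2 ^ s := by ring
  have f2 : (s + 1) * (2 ^ s * 2) = 2 * (s * 2 ^ s) + 2 * 2 ^ s := by ring
  have f3 : s * (s + 1) / 2 * ((s * (s + 1) / 2) + 1) = 0 ∨ True := Or.inr trivial
  generalize hg0 : (2 : ℕ) ^ s = P at *
  generalize hg1 : q * P = Q at *
  generalize hg2 : s * P = S at *
  omega
end

section
/- Define the Frame–Stewart numbers by FS(0) = 0 and FS(n) = min over 1 ≤ k < n+1 (with k disks moved using 3 pegs) of 2·FS(n−k) + 2^k − 1. Then FS(n) = Σ_{j=1}^{n} 2^{f(j)}, where f(j) is the largest m ≥ 0 with j > m(m+1)/2. -/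
/-- The Frame–Stewart numbers: `FS 0 = 0` and
`FS n = min_{1 ≤ k ≤ n} (2·FS (n−k) + 2^k − 1)` (here indexed by `m = n − k`). -/
def FS : ℕ → ℕ
  | 0 => 0
  | n + 1 =>
    (Finset.range (n + 1)).attach.inf' (by simp)
      (fun m => 2 * FS m.1 + 2 ^ (n + 1 - m.1) - 1)
decreasing_by exact Finset.mem_range.mp m.2

namespace KM

def T (t : ℕ) : ℕ := t * (t + 1) / 2

lemma two_T (t : ℕ) : 2 * T t = t * (t + 1) :=
  Nat.mul_div_cancel' (Nat.even_mul_succ_self t).two_dvd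

lemma T_succ (t : ℕ) : T (t + 1) = T t + (t + 1) := by
  have h1 := two_T t
  have h2 := two_T (t + 1)
  have h3 : (t + 1) * (t + 1 + 1) = t * (t + 1) + 2 * (t + 1) := by ring
  rw [h3] at h2
  set X := t * (t + 1)
  omega

lemma le_T (t : ℕ) : t ≤ T t := by
  induction t with
  | zero => simp [T]
  | succ n ih => rw [T_succ]; omega

lemma T_mono : Monotone T := monotone_nat_of_le_succ fun n => by rw [T_succ]; omega

lemma hanoiF_spec {j : ℕ} (hj : 1 ≤ j) : T (hanoiF j) < j := by
  have := Nat.findGreatest_spec (P := fun m => m * (m + 1) / 2 < j) (m := 0)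
    (Nat.zero_le j) (by simp; omega)
  simpa [T, hanoiF] using this

lemma hanoiF_upper (j : ℕ) : j ≤ T (hanoiF j + 1) := by
  by_cases h : hanoiF j + 1 ≤ j
  · have := Nat.findGreatest_is_greatest (P := fun m => m * (m + 1) / 2 < j)
      (Nat.lt_succ_self _) h
    simpa [T, hanoiF] using Nat.le_of_not_lt this
  · have hj : j ≤ hanoiF j := by omega
    calc j ≤ hanoiF j := hj
    _ ≤ T (hanoiF j) := le_T _
    _ ≤ T (hanoiF j + 1) := T_mono (by omega)

lemma hanoiF_eq {j m : ℕ} (h1 : T m < j) (h2 : j ≤ T (m + 1)) : hanoiF j = m := by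
  have hle : m ≤ j := lt_of_le_of_lt (le_T m) h1 |>.le
  have hm : m ≤ hanoiF j := Nat.le_findGreatest hle h1
  by_contra hne
  have hlt : m + 1 ≤ hanoiF j := by omega
  have : T (m + 1) ≤ T (hanoiF j) := T_mono hlt
  have := hanoiF_spec (j := j) (by omega)
  omega

lemma hanoiF_mono {j j' : ℕ} (h : j ≤ j') : hanoiF j ≤ hanoiF j' := by
  rcases Nat.eq_zero_or_pos j with rfl | hj
  · simp [hanoiF]
  · exact Nat.le_findGreatest (le_trans (le_trans (le_T _) (hanoiF_spec hj).le) h)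
      (lt_of_lt_of_le (hanoiF_spec hj) h)

lemma hanoiF_le_of (n : ℕ) : hanoiF (n + 1) ≤ n := by
  have h1 := hanoiF_spec (j := n + 1) (by omega)
  have := le_T (hanoiF (n + 1))
  omega

def S (n : ℕ) : ℕ := ∑ j ∈ Finset.Icc 1 n, 2 ^ hanoiF j

lemma S_zero : S 0 = 0 := by simp [S]

lemma S_succ (n : ℕ) : S (n + 1) = S n + 2 ^ hanoiF (n + 1) := by
  rw [S, S, Finset.sum_Icc_succ_top (by omega : 1 ≤ n + 1)]

lemma S_closed : ∀ n t r, 1 ≤ r → r ≤ t + 1 → n = T t + r →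
    S n = (t + r - 1) * 2 ^ t + 1 := by
  intro n
  induction n using Nat.strong_induction_on with
  | _ n ih =>
    intro t r hr1 hr2 hn
    have hTt : T t < n := by omega
    have hf : hanoiF n = t := hanoiF_eq hTt (by rw [T_succ]; omega)
    rcases Nat.lt_or_ge 1 r with hr | hr
    · -- r ≥ 2
      obtain ⟨n', rfl⟩ : ∃ n', n = n' + 1 := ⟨n - 1, by omega⟩
      have hih := ih n' (by omega) t (r - 1) (by omega) (by omega) (by omega)
      rw [S_succ, hih, hf]
      obtain ⟨b, rfl⟩ : ∃ b, r = b + 2 := ⟨r - 2, by omega⟩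
      have e1 : t + (b + 2 - 1) - 1 = t + b := by omega
      have e2 : t + (b + 2) - 1 = t + b + 1 := by omega
      rw [e1, e2]; ring
    · -- r = 1
      have hr' : r = 1 := by omega
      subst hr'
      rcases Nat.eq_zero_or_pos t with rfl | ht
      · -- n = 1
        have : n = 1 := by simpa [T] using hn
        subst this
        simp [S_succ, S_zero, hf]
      · obtain ⟨s, rfl⟩ : ∃ s, t = s + 1 := ⟨t - 1, by omega⟩
        obtain ⟨n', rfl⟩ : ∃ n', n = n' + 1 := ⟨n - 1, by omega⟩
        have hn' : n' = T s + (s + 1) := by rw [T_succ] at hn; omega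
        have hih := ih n' (by omega) s (s + 1) (by omega) (by omega) hn'
        rw [S_succ, hih, hf]
        have e1 : s + (s + 1) - 1 = 2 * s := by omega
        have e2 : s + 1 + 1 - 1 = s + 1 := by omega
        rw [e1, e2]; ring
/-- (B): equality at `m₀ = n - f`. -/
lemma S_eq_opt (n : ℕ) :
    S (n + 1) = 2 * S (n - hanoiF (n + 1)) + 2 ^ (hanoiF (n + 1) + 1) - 1 := by
  obtain ⟨f, hfdef⟩ : ∃ f, hanoiF (n + 1) = f := ⟨_, rfl⟩
  rw [hfdef]
  have hspec : T f < n + 1 := hfdef ▸ hanoiF_spec (by omega)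
  have hupper : n + 1 ≤ T f + (f + 1) := by
    have := hanoiF_upper (n + 1); rw [hfdef, T_succ] at this; exact this
  obtain ⟨r, hr1, hr2, hn1⟩ : ∃ r, 1 ≤ r ∧ r ≤ f + 1 ∧ n + 1 = T f + r :=
    ⟨n + 1 - T f, by omega, by omega, by omega⟩
  have hS1 : S (n + 1) = (f + r - 1) * 2 ^ f + 1 := S_closed _ f r hr1 hr2 hn1
  have hfle : f ≤ n := hfdef ▸ hanoiF_le_of n
  apply Nat.eq_sub_of_add_eq
  rcases Nat.eq_zero_or_pos f with hf0 | hfpos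
  · -- f = 0 : n + 1 = 1
    have hT0 : T 0 = 0 := by simp [T]
    subst hf0
    have hn0 : n = 0 := by omega
    subst hn0
    have h1 : hanoiF (0 + 1) = 0 := hanoiF_eq (by simp [T]) (by rw [T_succ]; simp [T])
    rw [S_succ, S_zero, h1]
    norm_num [S_zero]
  · obtain ⟨s, hs⟩ : ∃ s, f = s + 1 := ⟨f - 1, by omega⟩
    rcases Nat.lt_or_ge 1 r with hr | hr
    · -- r ≥ 2 : m₀ = T (f-1) + (r-1)
      have hm0 : n - f = T s + (r - 1) := by
        rw [hs] at hn1 ⊢; rw [T_succ] at hn1; omega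
      have hS2 : S (n - f) = (s + (r - 1) - 1) * 2 ^ s + 1 :=
        S_closed _ s (r - 1) (by omega) (by rw [hs] at hr2; omega) hm0
      rw [hS1, hS2, hs]
      obtain ⟨b, rfl⟩ : ∃ b, r = b + 2 := ⟨r - 2, by omega⟩
      have e1 : s + 1 + (b + 2) - 1 = s + b + 2 := by omega
      have e2 : s + (b + 2 - 1) - 1 = s + b := by omega
      rw [e1, e2]; ring
    · -- r = 1 : m₀ = T f - f = T (f-1)
      have hr' : r = 1 := by omega
      subst hr'
      have hm0 : n - f = T s := by rw [hs] at hn1 ⊢; rw [T_succ] at hn1; omega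
      rcases Nat.eq_zero_or_pos s with hs0 | hspos
      · -- f = 1, n + 1 = 2
        have hT0 : T 0 = 0 := by simp [T]
        rw [hs0] at hm0
        rw [hm0, hT0, S_zero, hS1, hs, hs0]; norm_num
      · obtain ⟨u, hu⟩ : ∃ u, s = u + 1 := ⟨s - 1, by omega⟩
        have hm0' : n - f = T u + (u + 1) := by rw [hm0, hu, T_succ]
        have hS2 : S (n - f) = (u + (u + 1) - 1) * 2 ^ u + 1 :=
          S_closed _ u (u + 1) (by omega) (by omega) hm0'
        rw [hS1, hS2, hs, hu]
        have e1 : u + 1 + 1 + 1 - 1 = u + 2 := by omega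
        have e2 : u + (u + 1) - 1 = 2 * u := by omega
        rw [e1, e2]; ring

/-- step identity for `h m = 2 S m + 2^(n+1-m) - 1`. -/
lemma h_step (n m : ℕ) (hm : m ≤ n) :
    (2 * S m + 2 ^ (n + 1 - m) - 1) + 2 ^ (hanoiF (m + 1) + 1) =
    (2 * S (m + 1) + 2 ^ (n + 1 - (m + 1)) - 1) + 2 ^ (n - m) := by
  rw [S_succ]
  have e1 : n + 1 - m = (n - m) + 1 := by omega
  have e2 : n + 1 - (m + 1) = n - m := by omega
  rw [e1, e2, pow_succ, pow_succ]
  have h1 : 1 ≤ 2 ^ (n - m) := Nat.one_le_two_pow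
  set a := 2 ^ (n - m)
  set b := 2 ^ hanoiF (m + 1)
  omega

lemma f_at_opt (n : ℕ) : hanoiF (n + 1) ≤ hanoiF (n - hanoiF (n + 1) + 1) + 1 := by
  set f := hanoiF (n + 1) with hfdef
  rcases Nat.eq_zero_or_pos f with hf0 | hfpos
  · omega
  obtain ⟨s, hs⟩ : ∃ s, f = s + 1 := ⟨f - 1, by omega⟩
  have hspec : T f < n + 1 := hanoiF_spec (by omega)
  have hTs : T s + (s + 1) = T f := by rw [hs, T_succ]
  have hTs_le : T s ≤ n - f := by omega
  have hP : T s < n - f + 1 := by omega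
  have hb : s ≤ n - f + 1 := le_trans (le_T s) (by omega)
  have h2 : s ≤ hanoiF (n - f + 1) :=
    Nat.le_findGreatest (P := fun m => m * (m + 1) / 2 < n - f + 1) hb hP
  omega

/-- (A): the minimum value is a lower bound. -/
lemma S_le_h (n m : ℕ) (hm : m ≤ n) :
    S (n + 1) ≤ 2 * S m + 2 ^ (n + 1 - m) - 1 := by
  set f := hanoiF (n + 1) with hfdef
  have hfle : f ≤ n := hanoiF_le_of n
  set m₀ := n - f with hm0def
  have hopt : S (n + 1) = 2 * S m₀ + 2 ^ (n + 1 - m₀) - 1 := by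
    have e : n + 1 - m₀ = f + 1 := by omega
    rw [e]; exact S_eq_opt n
  -- walk up from m₀
  have up : ∀ d, m₀ + d ≤ n →
      2 * S m₀ + 2 ^ (n + 1 - m₀) - 1 ≤ 2 * S (m₀ + d) + 2 ^ (n + 1 - (m₀ + d)) - 1 := by
    intro d
    induction d with
    | zero => intro _; exact le_refl _
    | succ d ihd =>
      intro hd
      refine le_trans (ihd (by omega)) ?_
      have hk : m₀ + d ≤ n := by omega
      have hid := h_step n (m₀ + d) hk
      -- need 2^(n - (m₀+d)) ≤ 2^(f(m₀+d+1)+1)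
      have hf1 : f ≤ hanoiF (m₀ + d + 1) + 1 := by
        refine le_trans (f_at_opt n) ?_
        exact Nat.succ_le_succ (hanoiF_mono (by omega))
      have hpow : 2 ^ (n - (m₀ + d)) ≤ 2 ^ (hanoiF (m₀ + d + 1) + 1) :=
        Nat.pow_le_pow_right (by omega) (by omega)
      have e : m₀ + (d + 1) = m₀ + d + 1 := by omega
      rw [e]
      omega
  -- walk down from m₀
  have down : ∀ d, 2 * S m₀ + 2 ^ (n + 1 - m₀) - 1 ≤
      2 * S (m₀ - d) + 2 ^ (n + 1 - (m₀ - d)) - 1 := by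
    intro d
    induction d with
    | zero => simp
    | succ d ihd =>
      rcases Nat.lt_or_ge d m₀ with hd | hd
      · refine le_trans ihd ?_
        set k := m₀ - (d + 1) with hkdef
        have hk1 : k + 1 = m₀ - d := by omega
        have hkn : k ≤ n := by omega
        have hid := h_step n k hkn
        have hfk : hanoiF (k + 1) ≤ f := hanoiF_mono (by omega)
        have hnk : f + 1 ≤ n - k := by omega
        have hpow : 2 ^ (hanoiF (k + 1) + 1) ≤ 2 ^ (n - k) :=
          Nat.pow_le_pow_right (by omega) (by omega)
        rw [← hk1]
        omega
      · have e : m₀ - (d + 1) = m₀ - d := by omega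
        rw [e]; exact ihd
  rcases Nat.lt_or_ge m m₀ with h | h
  · have := down (m₀ - m)
    have e : m₀ - (m₀ - m) = m := by omega
    rw [e] at this; omega
  · have := up (m - m₀) (by omega)
    have e : m₀ + (m - m₀) = m := by omega
    rw [e] at this; omega

end KM

/-- Klavžar–Milutinović closed form: `FS n = Σ_{j=1}^n 2^{f(j)}`. -/
theorem stmt_4 (n : ℕ) : FS n = ∑ j ∈ Finset.Icc 1 n, 2 ^ hanoiF j := by
  induction n using Nat.strong_induction_on with
  | _ n ih =>
    match n with
    | 0 => simp [FS]
    | Nat.succ n =>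
      show FS (n + 1) = KM.S (n + 1)
      rw [FS]
      have hfle : hanoiF (n + 1) ≤ n := KM.hanoiF_le_of n
      apply le_antisymm
      · -- inf' ≤ value at m₀ = n - f
        have hmem : n - hanoiF (n + 1) ∈ Finset.range (n + 1) := by
          rw [Finset.mem_range]; omega
        refine le_trans (Finset.inf'_le _ (Finset.mem_attach _ ⟨_, hmem⟩)) ?_
        show 2 * FS (n - hanoiF (n + 1)) + 2 ^ (n + 1 - (n - hanoiF (n + 1))) - 1 ≤ _
        have ihS : FS (n - hanoiF (n + 1)) = KM.S (n - hanoiF (n + 1)) :=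
          ih _ (by omega)
        rw [ihS]
        have e : n + 1 - (n - hanoiF (n + 1)) = hanoiF (n + 1) + 1 := by omega
        rw [e, ← KM.S_eq_opt n]
      · apply Finset.le_inf'
        rintro ⟨m, hm⟩ -
        show KM.S (n + 1) ≤ 2 * FS m + 2 ^ (n + 1 - m) - 1
        rw [Finset.mem_range] at hm
        have ihS : FS m = KM.S m := ih _ (by omega)
        rw [ihS]
        exact KM.S_le_h n m (by omega)
end

section
/- For all n ≥ 1, X₄(n) ≤ 2^n − 1, i.e., the Frame–Stewart 4-peg move count never exceeds the 3-peg optimal count, with strict inequality for n ≥ 3. -/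
lemma hanoiF_lt (j : ℕ) (hj : 1 ≤ j) : hanoiF j < j := by
  rcases lt_or_eq_of_le (Nat.findGreatest_le (P := fun m => m * (m + 1) / 2 < j) j) with h | h
  · exact h
  · exfalso
    have hP : j * (j + 1) / 2 < j :=
      Nat.findGreatest_of_ne_zero (P := fun m => m * (m + 1) / 2 < j) h (by omega)
    have : j ≤ j * (j + 1) / 2 := by
      have : 2 * j ≤ j * (j + 1) := by nlinarith
      omega
    omega

lemma sum_two_pow (n : ℕ) : ∑ i ∈ Finset.range n, 2 ^ i = 2 ^ n - 1 := by
  induction n with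
  | zero => simp
  | succ k ih =>
    rw [Finset.sum_range_succ, ih]
    have : 1 ≤ 2 ^ k := Nat.one_le_two_pow
    have : 2 ^ (k + 1) = 2 * 2 ^ k := by ring
    omega

lemma sum_icc_pow (n : ℕ) : ∑ j ∈ Finset.Icc 1 n, 2 ^ (j - 1) = 2 ^ n - 1 := by
  rw [← sum_two_pow n]
  rw [show Finset.Icc 1 n = Finset.Ico 1 (n + 1) by rfl]
  rw [Finset.sum_Ico_eq_sum_range]
  simp

/-- The 4-peg Frame–Stewart count never exceeds the 3-peg optimal count `2^n − 1`,
with strict inequality for `n ≥ 3`. -/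
theorem stmt_10 (n : ℕ) (hn : 1 ≤ n) :
    X4 n ≤ 2 ^ n - 1 ∧ (3 ≤ n → X4 n < 2 ^ n - 1) := by
  have hle : ∀ j ∈ Finset.Icc 1 n, 2 ^ hanoiF j ≤ 2 ^ (j - 1) := by
    intro j hj
    simp only [Finset.mem_Icc] at hj
    exact Nat.pow_le_pow_right (by norm_num) (by have := hanoiF_lt j hj.1; omega)
  constructor
  · calc X4 n ≤ ∑ j ∈ Finset.Icc 1 n, 2 ^ (j - 1) := Finset.sum_le_sum hle
    _ = 2 ^ n - 1 := sum_icc_pow n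
  · intro h3
    have hstrict : X4 n < ∑ j ∈ Finset.Icc 1 n, 2 ^ (j - 1) := by
      apply Finset.sum_lt_sum hle
      refine ⟨3, Finset.mem_Icc.mpr ⟨by norm_num, h3⟩, ?_⟩
      have : hanoiF 3 = 1 := by decide
      rw [this]; norm_num
    rw [sum_icc_pow n] at hstrict
    exact hstrict
end
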